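/- Let a ∈ D with 0 < |a| < 1, and let λ, μ ∈ ℂ. For the function h(z) := λ + μ/(1−\bar{a}z) (which belongs to H^1), one has ‖h‖_1 ≥ (1/π)|λ+μ| + (1/(2π))·|μ|·log(1/(1−|a|)). -/

import Mathlib

open MeasureTheory Complex Set Metric ENNReal

noncomputable section

/-- Normalized Lebesgue (arclength) measure `m` on the unit circle `T`, as a measure on `ℂ`. -/
def circleMeasure : Measure ℂ :=
  (ENNReal.ofReal (2 * Real.pi))⁻¹ •
    Measure.map (fun t : ℝ => Complex.exp (t * Complex.I)) (volume.restrict (Ioc 0 (2 * Real.pi)))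

/-- The open unit disk `D`. -/
def unitDisk : Set ℂ := ball (0 : ℂ) 1

/-- `g` is, `m`-a.e. on the circle, the (radial) boundary-value function of `f`. -/
def IsBoundaryValue (f g : ℂ → ℂ) : Prop :=
  ∀ᵐ ζ ∂circleMeasure,
    Filter.Tendsto (fun r : ℝ => f (((r : ℂ)) * ζ)) (nhdsWithin 1 (Iio 1)) (nhds (g ζ))

/-- The Hardy norm `‖f‖_p`; for `p = ∞` it is the sup norm over the disk. -/
def hNorm (p : ℝ≥0∞) (f : ℂ → ℂ) : ℝ≥0∞ :=
  if p = ⊤ then ⨆ z : unitDisk, (‖f (z : ℂ)‖₊ : ℝ≥0∞)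
  else ⨆ r : Ioo (0 : ℝ) 1,
    (∫⁻ ζ, (‖f ((((r : ℝ) : ℂ)) * ζ)‖₊ : ℝ≥0∞) ^ p.toReal ∂circleMeasure) ^ (1 / p.toReal)

/-- Membership in the Hardy space `H^p` (with `f` identified with its boundary values,
i.e. the values of `f` on the circle are `m`-a.e. its radial limits from the disk). -/
def MemHp (p : ℝ≥0∞) (f : ℂ → ℂ) : Prop :=
  DifferentiableOn ℂ f unitDisk ∧ hNorm p f < ⊤ ∧ IsBoundaryValue f f

/-- Inner functions: bounded holomorphic with unimodular boundary values. -/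
def IsInner (θ : ℂ → ℂ) : Prop :=
  MemHp ⊤ θ ∧ ∀ᵐ ζ ∂circleMeasure, ‖θ ζ‖ = 1

/-- `θ` is nonconstant on the unit disk. -/
def Nonconstant (θ : ℂ → ℂ) : Prop := ¬ ∃ c : ℂ, ∀ z ∈ unitDisk, θ z = c

/-- Membership in the star-invariant subspace `K^p_θ`:  `f ∈ H^p` and the function
`ζ ↦ conj ζ * conj (f ζ) * θ ζ` on the circle coincides `m`-a.e. with (the boundary values of)
an `H^p` function. -/
def MemKp (p : ℝ≥0∞) (θ f : ℂ → ℂ) : Prop :=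
  MemHp p f ∧ ∃ h : ℂ → ℂ, MemHp p h ∧
    ∀ᵐ ζ ∂circleMeasure, h ζ = (starRingEnd ℂ) ζ * (starRingEnd ℂ) (f ζ) * θ ζ

/-- `u ∈ Re H^p`. -/
def MemReHp (p : ℝ≥0∞) (u : ℂ → ℝ) : Prop :=
  ∃ f : ℂ → ℂ, MemHp p f ∧ ∀ᵐ ζ ∂circleMeasure, u ζ = (f ζ).re

/-- `u ∈ Re K^p_θ`. -/
def MemReKp (p : ℝ≥0∞) (θ : ℂ → ℂ) (u : ℂ → ℝ) : Prop :=
  ∃ f : ℂ → ℂ, MemKp p θ f ∧ ∀ᵐ ζ ∂circleMeasure, u ζ = (f ζ).re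

section Aux
open intervalIntegral

lemma meanValue {f : ℂ → ℂ} (hf : DiffContOnCl ℂ f (ball 0 1)) :
    ∫ θ in (0:ℝ)..(2*Real.pi), f (Complex.exp (θ * Complex.I)) = 2 * Real.pi * f 0 := by
  have h := hf.circleIntegral_sub_inv_smul (mem_ball_self one_pos)
  rw [circleIntegral] at h
  simp only [deriv_circleMap, circleMap, Complex.ofReal_one, one_mul, zero_add, sub_zero, smul_eq_mul] at h
  have : ∀ θ : ℝ, Complex.exp (θ * Complex.I) * Complex.I * ((Complex.exp (θ * Complex.I))⁻¹ * f (Complex.exp (θ * Complex.I))) = Complex.I * f (Complex.exp (θ * Complex.I)) := by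
    intro θ
    have hne : Complex.exp (θ * Complex.I) ≠ 0 := Complex.exp_ne_zero _
    field_simp
  simp_rw [this, intervalIntegral.integral_const_mul] at h
  have h2 : Complex.I * (2 * (Real.pi:ℂ) * f 0) = 2 * (Real.pi:ℂ) * Complex.I * f 0 := by ring
  rw [← h2] at h
  have := mul_left_cancel₀ Complex.I_ne_zero h
  rw [this]

variable {t : ℝ} {z : ℂ}

lemma slit (hz : ‖z‖ ≤ 1) (ht1 : t < 1) (ht0 : 0 ≤ t) : 1 - (t:ℂ) * z ∈ Complex.slitPlane := by
  refine Complex.mem_slitPlane_iff.2 (Or.inl ?_)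
  have : |z.re| ≤ 1 := (Complex.abs_re_le_norm z).trans hz
  have h2 : t * z.re ≤ t * 1 := by nlinarith [abs_le.1 this]
  simp only [Complex.sub_re, Complex.one_re, Complex.mul_re, Complex.ofReal_re,
    Complex.ofReal_im, zero_mul, sub_zero]
  nlinarith

lemma ne_zero_aux (hz : ‖z‖ ≤ 1) (ht1 : t < 1) (ht0 : 0 ≤ t) : 1 - (t:ℂ) * z ≠ 0 :=
  Complex.slitPlane_ne_zero (slit hz ht1 ht0)

lemma norm_exp_I (u : ℝ) : ‖Complex.exp (u * Complex.I)‖ = 1 := by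
  rw [Complex.norm_exp]
  simp

lemma hasDerivAt_F (ht0 : 0 ≤ t) (ht1 : t < 1) (u : ℝ) :
    HasDerivAt (fun x : ℝ => (x:ℂ) + Complex.I * Complex.log (1 - t * Complex.exp (x * Complex.I)))
      ((1 - (t:ℂ) * Complex.exp (u * Complex.I))⁻¹) u := by
  have he : HasDerivAt (fun x : ℝ => Complex.exp (x * Complex.I))
      (Complex.I * Complex.exp (u * Complex.I)) u := by
    have h1 : HasDerivAt (fun x : ℝ => (x:ℂ) * Complex.I) Complex.I u := by
      simpa using (Complex.ofRealCLM.hasDerivAt (x := u)).mul_const Complex.I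
    simpa [mul_comm] using h1.cexp
  have hg : HasDerivAt (fun x : ℝ => 1 - (t:ℂ) * Complex.exp (x * Complex.I))
      (-((t:ℂ) * (Complex.I * Complex.exp (u * Complex.I)))) u := by
    simpa using ((he.const_mul (t:ℂ)).const_sub 1)
  have hlog := hg.clog_real (slit (le_of_eq (norm_exp_I u)) ht1 ht0)
  have hid : HasDerivAt (fun x : ℝ => (x:ℂ)) 1 u := Complex.ofRealCLM.hasDerivAt
  have := hid.add (hlog.const_mul Complex.I)
  convert this using 1
  case e'_4 => rfl
  case e'_8 => rfl
  have hne := ne_zero_aux (z := Complex.exp (u * Complex.I)) (le_of_eq (norm_exp_I u)) ht1 ht0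
  field_simp
  have : Complex.I * ((t:ℂ) * (Complex.I * Complex.exp (u * Complex.I))) = -((t:ℂ) * Complex.exp (u * Complex.I)) := by
    rw [show Complex.I * ((t:ℂ) * (Complex.I * Complex.exp (u * Complex.I))) = Complex.I^2 * ((t:ℂ) * Complex.exp (u * Complex.I)) by ring, Complex.I_sq]; ring
  rw [Complex.I_sq]; ring

lemma closure_ball_norm {z : ℂ} (hz : z ∈ closure (ball (0:ℂ) 1)) : ‖z‖ ≤ 1 := by
  rw [closure_ball (0:ℂ) one_ne_zero] at hz
  simpa [dist_zero_right] using hz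

lemma int_inv (ht0 : 0 ≤ t) (ht1 : t < 1) :
    ∫ u in (0:ℝ)..(2*Real.pi), (1 - (t:ℂ) * Complex.exp (u * Complex.I))⁻¹ = 2 * Real.pi := by
  have hd : DiffContOnCl ℂ (fun z => (1 - (t:ℂ)*z)⁻¹) (ball 0 1) := by
    apply DifferentiableOn.diffContOnCl
    intro z hz
    exact (((differentiableAt_const (1:ℂ)).sub ((differentiableAt_const _).mul differentiableAt_id)).inv
      (ne_zero_aux (closure_ball_norm hz) ht1 ht0)).differentiableWithinAt
  simpa using meanValue hd

lemma int_log (ht0 : 0 ≤ t) (ht1 : t < 1) :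
    ∫ u in (0:ℝ)..(2*Real.pi), Complex.log (1 - (t:ℂ) * Complex.exp (u * Complex.I)) = 0 := by
  have hd : DiffContOnCl ℂ (fun z => Complex.log (1 - (t:ℂ)*z)) (ball 0 1) := by
    apply DifferentiableOn.diffContOnCl
    intro z hz
    exact (((differentiableAt_const (1:ℂ)).sub ((differentiableAt_const _).mul differentiableAt_id)).clog
      (slit (closure_ball_norm hz) ht1 ht0)).differentiableWithinAt
  simpa using meanValue hd

lemma cont_inv (ht0 : 0 ≤ t) (ht1 : t < 1) :
    Continuous (fun u : ℝ => (1 - (t:ℂ) * Complex.exp (u * Complex.I))⁻¹) := by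
  apply Continuous.inv₀
  · continuity
  · exact fun u => ne_zero_aux (le_of_eq (norm_exp_I u)) ht1 ht0

lemma cont_log (ht0 : 0 ≤ t) (ht1 : t < 1) :
    Continuous (fun u : ℝ => Complex.log (1 - (t:ℂ) * Complex.exp (u * Complex.I))) := by
  rw [continuous_iff_continuousAt]
  intro x
  apply ContinuousAt.clog (by fun_prop)
  exact slit (le_of_eq (norm_exp_I x)) ht1 ht0

lemma int_main (ht0 : 0 ≤ t) (ht1 : t < 1) :
    ∫ u in (0:ℝ)..(2*Real.pi), Complex.I * ((u:ℂ) - Real.pi) * (1 - (t:ℂ) * Complex.exp (u * Complex.I))⁻¹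
      = -2 * Real.pi * Real.log (1-t) := by
  set F := fun x : ℝ => (x:ℂ) + Complex.I * Complex.log (1 - (t:ℂ) * Complex.exp (x * Complex.I)) with hF
  have hu : ∀ x ∈ Set.uIcc (0:ℝ) (2*Real.pi), HasDerivAt (fun x : ℝ => Complex.I * ((x:ℂ) - Real.pi)) Complex.I x := by
    intro x _
    simpa using ((Complex.ofRealCLM.hasDerivAt (x := x)).sub_const (Real.pi:ℂ)).const_mul Complex.I
  have hv : ∀ x ∈ Set.uIcc (0:ℝ) (2*Real.pi), HasDerivAt F ((1 - (t:ℂ) * Complex.exp (x * Complex.I))⁻¹) x :=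
    fun x _ => hasDerivAt_F ht0 ht1 x
  have hu' : IntervalIntegrable (fun _ : ℝ => Complex.I) volume 0 (2*Real.pi) := intervalIntegrable_const
  have hv' : IntervalIntegrable (fun x : ℝ => (1 - (t:ℂ) * Complex.exp (x * Complex.I))⁻¹) volume 0 (2*Real.pi) :=
    (cont_inv ht0 ht1).intervalIntegrable _ _
  have hparts := intervalIntegral.integral_mul_deriv_eq_deriv_mul hu hv hu' hv'
  rw [hparts]
  have hIF : ∀ x : ℝ, Complex.I * F x
      = Complex.I * (x:ℂ) - Complex.log (1 - (t:ℂ) * Complex.exp (x * Complex.I)) := by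
    intro x
    rw [hF]
    calc Complex.I * ((x:ℂ) + Complex.I * Complex.log (1 - (t:ℂ) * Complex.exp (x * Complex.I)))
        = Complex.I * (x:ℂ) + (Complex.I * Complex.I) * Complex.log (1 - (t:ℂ) * Complex.exp (x * Complex.I)) := by ring
      _ = _ := by rw [Complex.I_mul_I]; ring
  have hid : ∫ x in (0:ℝ)..(2*Real.pi), ((x:ℝ):ℂ) = (((2*Real.pi)^2/2 : ℝ) : ℂ) := by
    rw [intervalIntegral.integral_ofReal, integral_id]
    norm_num
  have hIFint : ∫ x in (0:ℝ)..(2*Real.pi), Complex.I * F x = Complex.I * (((2*Real.pi)^2/2 : ℝ) : ℂ) := by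
    simp_rw [hIF]
    rw [intervalIntegral.integral_sub, intervalIntegral.integral_const_mul, hid, int_log ht0 ht1]
    · ring
    · exact (continuous_const.mul (Complex.continuous_ofReal)).intervalIntegrable _ _
    · exact (cont_log ht0 ht1).intervalIntegrable _ _
  rw [hIFint]
  have e2π : Complex.exp (((2*Real.pi : ℝ):ℂ) * Complex.I) = 1 := by
    push_cast
    exact Complex.exp_two_pi_mul_I
  have hlog1t : Complex.log (1 - (t:ℂ)) = ((Real.log (1-t) : ℝ) : ℂ) := by
    rw [show (1 - (t:ℂ)) = (((1-t : ℝ)):ℂ) by push_cast; ring]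
    exact (Complex.ofReal_log (by linarith)).symm
  have hF2 : F (2*Real.pi) = ((2*Real.pi : ℝ):ℂ) + Complex.I * ((Real.log (1-t) : ℝ) : ℂ) := by
    simp only [hF, e2π, mul_one, hlog1t]
  have hF0 : F 0 = Complex.I * ((Real.log (1-t) : ℝ) : ℂ) := by
    simp only [hF, Complex.ofReal_zero, zero_mul, Complex.exp_zero, mul_one, hlog1t, zero_add]
  rw [hF2, hF0]
  push_cast
  linear_combination (2*(Real.pi:ℂ)*(Real.log (1-t):ℂ)) * Complex.I_sq


lemma meas_exp : Measurable (fun t : ℝ => Complex.exp (t * Complex.I)) := by fun_prop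

lemma circleMeasure_univ : circleMeasure univ = 1 := by
  rw [circleMeasure]
  simp only [Measure.smul_apply, smul_eq_mul]
  rw [Measure.map_apply meas_exp MeasurableSet.univ]
  simp only [preimage_univ, Measure.restrict_apply, univ_inter, MeasurableSet.univ]
  rw [Real.volume_Ioc, sub_zero]
  rw [ENNReal.inv_mul_cancel]
  · simp [Real.pi_pos, ne_of_gt]
  · exact ofReal_ne_top

instance : IsProbabilityMeasure circleMeasure := ⟨circleMeasure_univ⟩

lemma circleMeasure_ae_norm : ∀ᵐ ζ ∂circleMeasure, ‖ζ‖ = 1 := by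
  rw [circleMeasure]
  refine Measure.ae_smul_measure ?_ _
  rw [MeasureTheory.ae_map_iff meas_exp.aemeasurable
    ((isClosed_eq (by continuity) continuous_const).measurableSet)]
  exact Filter.Eventually.of_forall fun t => norm_exp_I t

lemma integral_circleMeasure {f : ℂ → ℝ} (hf : Measurable f) :
    ∫ ζ, f ζ ∂circleMeasure
      = (1/(2*Real.pi)) * ∫ s in (0:ℝ)..(2*Real.pi), f (Complex.exp (s * Complex.I)) := by
  rw [circleMeasure, MeasureTheory.integral_smul_measure,
    integral_map meas_exp.aemeasurable hf.aestronglyMeasurable,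
    intervalIntegral.integral_of_le (by positivity), smul_eq_mul]
  congr 1
  rw [ENNReal.toReal_inv, ENNReal.toReal_ofReal (by positivity)]
  rw [one_div]

lemma lintegral_circleMeasure_le {g : ℂ → ℝ≥0∞} {C : ℝ≥0∞}
    (hg : ∀ᵐ ζ ∂circleMeasure, g ζ ≤ C) : ∫⁻ ζ, g ζ ∂circleMeasure ≤ C := by
  calc ∫⁻ ζ, g ζ ∂circleMeasure ≤ ∫⁻ _, C ∂circleMeasure := lintegral_mono_ae hg
  _ = C := by simp [circleMeasure_univ]

lemma hint_aux {t : ℝ} (ht0 : 0 ≤ t) (ht1 : t < 1) (lam mu U V : ℂ) :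
    (∫ u in (0:ℝ)..(2*Real.pi),
      (lam + mu * (1 - (t:ℂ) * Complex.exp (u * Complex.I))⁻¹) *
        (U/(Real.pi:ℂ) + (V/(2*(Real.pi:ℂ))) * (Complex.I * ((u:ℂ) - (Real.pi:ℂ)))))
    = 2 * (U * (lam + mu)) + (V * mu) * ((-(Real.log (1-t)) : ℝ) : ℂ) := by
  have c1 : Continuous (fun u : ℝ => ((u:ℂ) - (Real.pi:ℂ))) := by continuity
  have hsplit : (fun u : ℝ =>
      (lam + mu * (1 - (t:ℂ) * Complex.exp (u * Complex.I))⁻¹) *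
        (U/(Real.pi:ℂ) + (V/(2*(Real.pi:ℂ))) * (Complex.I * ((u:ℂ) - (Real.pi:ℂ)))))
      = fun u : ℝ =>
        ((lam * (U/(Real.pi:ℂ))
          + (lam * (V/(2*(Real.pi:ℂ))) * Complex.I) * ((u:ℂ) - (Real.pi:ℂ)))
          + (mu * (U/(Real.pi:ℂ))) * (1 - (t:ℂ) * Complex.exp (u * Complex.I))⁻¹)
          + (mu * (V/(2*(Real.pi:ℂ)))) *
            (Complex.I * ((u:ℂ) - (Real.pi:ℂ)) * (1 - (t:ℂ) * Complex.exp (u * Complex.I))⁻¹) := by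
    funext u; ring
  rw [hsplit]
  have i2 : IntervalIntegrable (fun u : ℝ => (lam * (V/(2*(Real.pi:ℂ))) * Complex.I) * ((u:ℂ) - (Real.pi:ℂ))) volume 0 (2*Real.pi) :=
    (continuous_const.mul c1).intervalIntegrable _ _
  have i3 : IntervalIntegrable (fun u : ℝ => (mu * (U/(Real.pi:ℂ))) * (1 - (t:ℂ) * Complex.exp (u * Complex.I))⁻¹) volume 0 (2*Real.pi) :=
    (continuous_const.mul (cont_inv ht0 ht1)).intervalIntegrable _ _
  have i4 : IntervalIntegrable (fun u : ℝ => (mu * (V/(2*(Real.pi:ℂ)))) * (Complex.I * ((u:ℂ) - (Real.pi:ℂ)) * (1 - (t:ℂ) * Complex.exp (u * Complex.I))⁻¹)) volume 0 (2*Real.pi) :=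
    (continuous_const.mul ((continuous_const.mul c1).mul (cont_inv ht0 ht1))).intervalIntegrable _ _
  rw [intervalIntegral.integral_add (((_root_.intervalIntegrable_const).add i2).add i3) i4,
      intervalIntegral.integral_add ((_root_.intervalIntegrable_const).add i2) i3,
      intervalIntegral.integral_add (_root_.intervalIntegrable_const) i2]
  simp only [intervalIntegral.integral_const_mul]
  have iB : ∫ u in (0:ℝ)..(2*Real.pi), ((u:ℂ) - (Real.pi:ℂ)) = 0 := by
    have hcast : (fun u : ℝ => ((u:ℂ) - (Real.pi:ℂ))) = fun u : ℝ => (((u - Real.pi : ℝ)) : ℂ) := by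
      funext u; push_cast; ring
    rw [hcast, intervalIntegral.integral_ofReal]
    have : ∫ u in (0:ℝ)..(2*Real.pi), (u - Real.pi) = 0 := by
      rw [intervalIntegral.integral_sub intervalIntegrable_id intervalIntegrable_const,
        integral_id, intervalIntegral.integral_const]
      simp [smul_eq_mul]; ring
    rw [this]; simp
  rw [iB, int_inv ht0 ht1, int_main ht0 ht1, intervalIntegral.integral_const]
  have hπ : (Real.pi : ℂ) ≠ 0 := Complex.ofReal_ne_zero.mpr Real.pi_ne_zero
  push_cast
  rw [sub_zero, real_smul]
  push_cast
  field_simp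
  ring

end Aux

/-- The lower bound, via Hardy's inequality, for the `H¹` norm of
`h(z) = λ + μ/(1 − conj a · z)` with `0 < |a| < 1`:
`‖h‖₁ ≥ (1/π)|λ+μ| + (1/(2π))|μ| log(1/(1−|a|))`. -/
theorem hardy_lower_bound (a : ℂ) (ha0 : a ≠ 0) (ha : ‖a‖ < 1) (lam mu : ℂ)
    (h : ℂ → ℂ) (hh : ∀ z : ℂ, h z = lam + mu * (1 - (starRingEnd ℂ) a * z)⁻¹) :
    MemHp 1 h ∧
    (1 / Real.pi) * ‖lam + mu‖ +
        (1 / (2 * Real.pi)) * ‖mu‖ * Real.log (1 / (1 - ‖a‖)) ≤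
      ∫ ζ, ‖h ζ‖ ∂circleMeasure := by
  have ht0 : (0:ℝ) < ‖a‖ := norm_pos_iff.2 ha0
  set t := ‖a‖ with htdef
  have ht1 : t < 1 := ha
  have ht0' : (0:ℝ) ≤ t := ht0.le
  have h1t : (0:ℝ) < 1 - t := by linarith
  have hfun : h = fun z => lam + mu * (1 - (starRingEnd ℂ) a * z)⁻¹ := funext hh
  have hmeas : Measurable h := by
    rw [hfun]
    exact measurable_const.add (measurable_const.mul
      ((measurable_const.sub (measurable_const.mul measurable_id)).inv))
  have hnorml : ‖(starRingEnd ℂ) a‖ = t := RCLike.norm_conj a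
  have hsmall : ∀ z : ℂ, ‖z‖ ≤ 1 → ‖(starRingEnd ℂ) a * z‖ ≤ t := by
    intro z hz
    rw [norm_mul, hnorml]
    nlinarith [norm_nonneg z]
  have hne : ∀ z : ℂ, ‖z‖ ≤ 1 → 1 - (starRingEnd ℂ) a * z ≠ 0 := by
    intro z hz hcontra
    have h2 := hsmall z hz
    rw [← sub_eq_zero.mp hcontra] at h2
    simp at h2
    linarith
  have hlb : ∀ z : ℂ, ‖z‖ ≤ 1 → 1 - t ≤ ‖1 - (starRingEnd ℂ) a * z‖ := by
    intro z hz
    have h2 := hsmall z hz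
    have h3 := norm_sub_norm_le (1:ℂ) ((starRingEnd ℂ) a * z)
    simp only [norm_one] at h3
    linarith
  have hbound : ∀ z : ℂ, ‖z‖ ≤ 1 → ‖h z‖ ≤ ‖lam‖ + ‖mu‖ * (1-t)⁻¹ := by
    intro z hz
    rw [hh z]
    refine (norm_add_le _ _).trans ?_
    have h4 : ‖mu * (1 - (starRingEnd ℂ) a * z)⁻¹‖ ≤ ‖mu‖ * (1-t)⁻¹ := by
      rw [norm_mul, norm_inv]
      have h5 := inv_anti₀ h1t (hlb z hz)
      exact mul_le_mul_of_nonneg_left h5 (norm_nonneg mu)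
    linarith
  have hdiff : DifferentiableOn ℂ h unitDisk := by
    rw [hfun]
    intro z hz
    have hz1 : ‖z‖ ≤ 1 := by
      have h6 : dist z 0 < 1 := hz
      rw [dist_zero_right] at h6
      linarith
    exact ((differentiableAt_const lam).add ((differentiableAt_const mu).mul
      (((differentiableAt_const (1:ℂ)).sub ((differentiableAt_const _).mul
        differentiableAt_id)).inv (hne z hz1)))).differentiableWithinAt
  have hnorm1 : hNorm 1 h < ⊤ := by
    rw [hNorm, if_neg one_ne_top]
    refine lt_of_le_of_lt (iSup_le fun r => ?_)
      (ofReal_lt_top (r := ‖lam‖ + ‖mu‖ * (1-t)⁻¹))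
    have hr := r.2
    have hb : (∫⁻ ζ, (‖h ((((r : Ioo (0:ℝ) 1) : ℝ) : ℂ) * ζ)‖₊ : ℝ≥0∞) ^ ((1:ℝ≥0∞).toReal) ∂circleMeasure)
        ≤ ENNReal.ofReal (‖lam‖ + ‖mu‖ * (1-t)⁻¹) := by
      simp only [ENNReal.toReal_one, ENNReal.rpow_one]
      apply lintegral_circleMeasure_le
      filter_upwards [circleMeasure_ae_norm] with ζ hζ
      rw [← enorm_eq_nnnorm, ← ofReal_norm_eq_enorm]
      apply ENNReal.ofReal_le_ofReal
      apply hbound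
      rw [norm_mul, hζ, mul_one, Complex.norm_real, Real.norm_eq_abs, abs_of_pos hr.1]
      exact hr.2.le
    calc (∫⁻ ζ, (‖h ((((r : Ioo (0:ℝ) 1) : ℝ) : ℂ) * ζ)‖₊ : ℝ≥0∞) ^ ((1:ℝ≥0∞).toReal) ∂circleMeasure) ^ (1/(1:ℝ≥0∞).toReal)
        = (∫⁻ ζ, (‖h ((((r : Ioo (0:ℝ) 1) : ℝ) : ℂ) * ζ)‖₊ : ℝ≥0∞) ^ ((1:ℝ≥0∞).toReal) ∂circleMeasure) := by
          simp
      _ ≤ _ := hb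
  have hbv : IsBoundaryValue h h := by
    filter_upwards [circleMeasure_ae_norm] with ζ hζ
    have hcont : ContinuousAt h ζ := by
      rw [hfun]
      refine continuousAt_const.add (continuousAt_const.mul (ContinuousAt.inv₀ ?_ (hne ζ hζ.le)))
      exact continuousAt_const.sub (continuousAt_const.mul continuousAt_id)
    have hmul : Filter.Tendsto (fun r : ℝ => ((r:ℂ)) * ζ) (nhdsWithin 1 (Iio 1)) (nhds ζ) := by
      have h5 : Filter.Tendsto (fun r : ℝ => ((r:ℂ)) * ζ) (nhds 1) (nhds (((1:ℝ):ℂ) * ζ)) :=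
        ((Complex.continuous_ofReal.tendsto 1).mul_const ζ)
      simp only [Complex.ofReal_one, one_mul] at h5
      exact h5.mono_left nhdsWithin_le_nhds
    exact hcont.tendsto.comp hmul
  refine ⟨⟨hdiff, hnorm1, hbv⟩, ?_⟩
  -- main inequality
  set α := ((starRingEnd ℂ) a).arg with hαdef
  have hα : ((t:ℝ):ℂ) * Complex.exp ((α:ℂ) * Complex.I) = (starRingEnd ℂ) a := by
    have h6 := Complex.norm_mul_exp_arg_mul_I ((starRingEnd ℂ) a)
    rw [← h6]
    congr 2
    rw [Complex.norm_conj, htdef]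
  set H : ℝ → ℂ := fun u => lam + mu * (1 - (t:ℂ) * Complex.exp (u * Complex.I))⁻¹ with hHdef
  have hHcont : Continuous H := continuous_const.add (continuous_const.mul (cont_inv ht0' ht1))
  have hHh : ∀ u : ℝ, h (Complex.exp (((u - α : ℝ):ℂ) * Complex.I)) = H u := by
    intro u
    rw [hh]
    show _ = lam + mu * (1 - (t:ℂ) * Complex.exp (u * Complex.I))⁻¹
    congr 3
    rw [← hα, mul_assoc, ← Complex.exp_add]
    congr 1
    push_cast
    ring
  have sgn : ∀ c : ℂ, ∃ U : ℂ, ‖U‖ ≤ 1 ∧ U * c = ((‖c‖ : ℝ) : ℂ) := by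
    intro c
    rcases eq_or_ne c 0 with hc | hc
    · exact ⟨0, by simp, by simp [hc]⟩
    · have hcn : ‖c‖ ≠ 0 := norm_ne_zero_iff.2 hc
      refine ⟨(starRingEnd ℂ) c / ((‖c‖ : ℝ) : ℂ), ?_, ?_⟩
      · rw [norm_div, RCLike.norm_conj, Complex.norm_real, Real.norm_eq_abs,
          _root_.abs_of_nonneg (norm_nonneg c), div_self hcn]
      · rw [div_mul_eq_mul_div, mul_comm, Complex.mul_conj, Complex.normSq_eq_norm_sq]
        rw [show (((‖c‖)^2 :ℝ):ℂ) = ((‖c‖:ℝ):ℂ)^2 by push_cast; ring]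
        rw [sq, mul_div_assoc, div_self (Complex.ofReal_ne_zero.mpr hcn), mul_one]
  obtain ⟨U, hU1, hU2⟩ := sgn (lam + mu)
  obtain ⟨V, hV1, hV2⟩ := sgn mu
  set G : ℝ → ℂ := fun u =>
    U/(Real.pi:ℂ) + (V/(2*(Real.pi:ℂ))) * (Complex.I * ((u:ℂ) - (Real.pi:ℂ))) with hGdef
  have hGcont : Continuous G := by
    apply continuous_const.add
    apply continuous_const.mul
    exact continuous_const.mul (by continuity)
  have hπ3 : (3:ℝ) < Real.pi := Real.pi_gt_three
  have hGbound : ∀ u ∈ Icc (0:ℝ) (2*Real.pi), ‖G u‖ ≤ 1 := by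
    intro u hu
    simp only [hGdef]
    refine (norm_add_le _ _).trans ?_
    have e1 : ‖U/(Real.pi:ℂ)‖ ≤ 1/Real.pi := by
      rw [norm_div, Complex.norm_real, Real.norm_eq_abs, abs_of_pos Real.pi_pos]
      gcongr
    have e3 : ‖(2*(Real.pi:ℂ))‖ = 2*Real.pi := by
      rw [show (2*(Real.pi:ℂ)) = (((2*Real.pi : ℝ)):ℂ) by push_cast; ring,
        Complex.norm_real, Real.norm_eq_abs, _root_.abs_of_pos Real.two_pi_pos]
    have e4 : ‖Complex.I * ((u:ℂ) - (Real.pi:ℂ))‖ ≤ Real.pi := by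
      rw [norm_mul, Complex.norm_I, one_mul,
        show ((u:ℂ) - (Real.pi:ℂ)) = (((u - Real.pi : ℝ)):ℂ) by push_cast; ring,
        Complex.norm_real, Real.norm_eq_abs]
      rw [abs_le]
      constructor <;> [linarith [hu.1]; linarith [hu.2]]
    have e2 : ‖(V/(2*(Real.pi:ℂ))) * (Complex.I * ((u:ℂ) - (Real.pi:ℂ)))‖ ≤ (1/(2*Real.pi)) * Real.pi := by
      rw [norm_mul, norm_div, e3]
      have e5 : ‖V‖ / (2*Real.pi) ≤ 1/(2*Real.pi) := by gcongr
      exact mul_le_mul e5 e4 (norm_nonneg _) (by positivity)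
    have e6 : (1/(2*Real.pi)) * Real.pi = 1/2 := by
      field_simp
    have e7 : 1/Real.pi ≤ 1/2 := by
      rw [div_le_div_iff₀ Real.pi_pos (by norm_num)]
      linarith
    linarith
  have hint : (∫ u in (0:ℝ)..(2*Real.pi), H u * G u)
      = 2 * (U * (lam + mu)) + (V * mu) * ((-(Real.log (1-t)) : ℝ) : ℂ) := by
    simp only [hHdef, hGdef]
    exact hint_aux ht0' ht1 lam mu U V
  have hre : (2*‖lam+mu‖ + ‖mu‖*(-Real.log (1-t)) : ℝ)
      = (∫ u in (0:ℝ)..(2*Real.pi), H u * G u).re := by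
    rw [hint, hU2, hV2]
    rw [show (2 * ((‖lam+mu‖:ℝ):ℂ) + ((‖mu‖:ℝ):ℂ) * ((-(Real.log (1-t)) : ℝ) : ℂ))
        = (((2*‖lam+mu‖ + ‖mu‖*(-Real.log (1-t)) : ℝ)):ℂ) by push_cast; ring]
    rw [Complex.ofReal_re]
  have key : 2*‖lam+mu‖ + ‖mu‖*(-Real.log (1-t)) ≤ ∫ u in (0:ℝ)..(2*Real.pi), ‖H u‖ := by
    rw [hre]
    refine (Complex.re_le_norm _).trans ?_
    refine (intervalIntegral.norm_integral_le_integral_norm Real.two_pi_pos.le).trans ?_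
    refine intervalIntegral.integral_mono_on Real.two_pi_pos.le
      ((hHcont.mul hGcont).norm.intervalIntegrable _ _)
      (hHcont.norm.intervalIntegrable _ _) ?_
    intro u hu
    rw [norm_mul]
    exact mul_le_of_le_one_right (norm_nonneg _) (hGbound u hu)
  have hM : ∫ ζ, ‖h ζ‖ ∂circleMeasure
      = (1/(2*Real.pi)) * ∫ s in (0:ℝ)..(2*Real.pi), ‖h (Complex.exp ((s:ℂ) * Complex.I))‖ :=
    integral_circleMeasure hmeas.norm
  set K : ℝ → ℝ := fun s => ‖h (Complex.exp ((s:ℂ) * Complex.I))‖ with hKdef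
  have hKH : ∀ u : ℝ, K (u - α) = ‖H u‖ := by
    intro u
    simp only [hKdef]
    exact congrArg norm (hHh u)
  have hKper : Function.Periodic K (2*Real.pi) := by
    intro s
    simp only [hKdef]
    congr 2
    rw [show ((s + 2*Real.pi : ℝ):ℂ) * Complex.I = (s:ℂ)*Complex.I + 2*(Real.pi:ℂ)*Complex.I by push_cast; ring,
      Complex.exp_add]
    rw [show (2*((Real.pi:ℝ):ℂ)*Complex.I) = 2*(Real.pi:ℂ)*Complex.I from rfl,
      Complex.exp_two_pi_mul_I, mul_one]
  have hshift : ∫ u in (0:ℝ)..(2*Real.pi), ‖H u‖ = ∫ s in (0:ℝ)..(2*Real.pi), K s := by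
    have h7 : ∀ u:ℝ, ‖H u‖ = K (u - α) := fun u => (hKH u).symm
    simp_rw [h7]
    rw [intervalIntegral.integral_comp_sub_right K α]
    have h8 := hKper.intervalIntegral_add_eq (0 - α) 0
    rw [zero_add] at h8
    rw [show (0:ℝ) - α = -α by ring] at h8 ⊢
    rw [show (2:ℝ)*Real.pi - α = -α + 2*Real.pi by ring]
    exact h8
  calc (1/Real.pi)*‖lam+mu‖ + (1/(2*Real.pi))*‖mu‖*Real.log (1/(1-t))
      = (1/(2*Real.pi)) * (2*‖lam+mu‖ + ‖mu‖*(-Real.log (1-t))) := by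
        rw [one_div (1-t), Real.log_inv]
        field_simp
    _ ≤ (1/(2*Real.pi)) * ∫ u in (0:ℝ)..(2*Real.pi), ‖H u‖ :=
        mul_le_mul_of_nonneg_left key (by positivity)
    _ = (1/(2*Real.pi)) * ∫ s in (0:ℝ)..(2*Real.pi), K s := by rw [hshift]
    _ = ∫ ζ, ‖h ζ‖ ∂circleMeasure := hM.symm
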